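/- In the paired exponential setting with C = C_ℝ and Q = (Q,…,Q) with Q ≪ P of bounded density, the penalty function equals α_B(Q) = (Γ - (β log β)/2) + (β/2) log λ̂ + (β/2) H(Q|P), where λ̂ = (N²-2B)/β, β = ∑ⱼ 1/αⱼ, Γ = ∑ⱼ (1/αⱼ)log(1/αⱼ), and H(Q|P) is the relative entropy. -/

import Mathlib

open Real Finset MeasureTheory Filter Topology

/-- Finite Gibbs inequality. -/
lemma gibbs_sum {N : ℕ} (hN : 1 ≤ N) (c w : Fin N → ℝ)
    (hc : ∀ n, 0 < c n) (hw : ∀ n, 0 < w n) :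
    ∑ n, c n * log (w n) ≤
      ∑ n, c n * log (c n) - (∑ n, c n) * log (∑ n, c n)
        + (∑ n, c n) * log (∑ n, w n) := by
  have hne : (univ : Finset (Fin N)).Nonempty := by
    have : Nonempty (Fin N) := ⟨⟨0, hN⟩⟩
    exact univ_nonempty
  have hβ : 0 < ∑ n, c n := Finset.sum_pos (fun n _ => hc n) hne
  have hs : 0 < ∑ n, w n := Finset.sum_pos (fun n _ => hw n) hne
  set β := ∑ n, c n with hβdef
  set s := ∑ n, w n with hsdef
  have key : ∀ n : Fin N, c n * log (w n) ≤
      c n * log (c n) - c n * log β + c n * log s + (β / s * w n - c n) := by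
    intro n
    have hwβ : 0 < w n * β := mul_pos (hw n) hβ
    have hcs : 0 < c n * s := mul_pos (hc n) hs
    have h1 : log (w n * β / (c n * s)) ≤ w n * β / (c n * s) - 1 :=
      log_le_sub_one_of_pos (div_pos hwβ hcs)
    have h2 : log (w n * β / (c n * s)) =
        log (w n) + log β - log (c n) - log s := by
      rw [Real.log_div (ne_of_gt hwβ) (ne_of_gt hcs),
        Real.log_mul (ne_of_gt (hw n)) (ne_of_gt hβ),
        Real.log_mul (ne_of_gt (hc n)) (ne_of_gt hs)]
      ring
    have h4 : c n * (w n * β / (c n * s) - 1) = β / s * w n - c n := by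
      have hcn : c n ≠ 0 := (hc n).ne'
      field_simp
    have h5 := mul_le_mul_of_nonneg_left h1 (le_of_lt (hc n))
    rw [h2, h4] at h5
    have h6 : c n * (log (w n) + log β - log (c n) - log s)
        = c n * log (w n) + c n * log β - c n * log (c n) - c n * log s := by ring
    linarith
  calc ∑ n, c n * log (w n)
      ≤ ∑ n, (c n * log (c n) - c n * log β + c n * log s + (β / s * w n - c n)) :=
        Finset.sum_le_sum (fun n _ => key n)
    _ = ∑ n, c n * log (c n) - β * log β + β * log s + (β / s * s - β) := by
        rw [Finset.sum_add_distrib, Finset.sum_sub_distrib, Finset.sum_add_distrib,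
          Finset.sum_sub_distrib, ← Finset.sum_mul, ← Finset.sum_mul, ← Finset.mul_sum,
          ← hβdef, ← hsdef]
    _ = ∑ n, c n * log (c n) - β * log β + β * log s := by
        rw [div_mul_cancel₀ _ (ne_of_gt hs)]; ring

/-- Pointwise entropy inequality. -/
lemma entropy_pt {d s k : ℝ} (hd : 0 ≤ d) (hs : 0 < s) (hk : 0 < k) :
    d * log (s ^ 2) ≤ d * log k + d * log d + s ^ 2 / k - d := by
  rcases eq_or_lt_of_le hd with h | h
  · simp [← h]
    positivity
  · have h1 : log (s ^ 2 / (k * d)) ≤ s ^ 2 / (k * d) - 1 :=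
      log_le_sub_one_of_pos (by positivity)
    have h2 : log (s ^ 2 / (k * d)) = log (s ^ 2) - log k - log d := by
      rw [Real.log_div (by positivity) (by positivity),
        Real.log_mul (ne_of_gt hk) (ne_of_gt h)]
      ring
    have h4 : d * (s ^ 2 / (k * d) - 1) = s ^ 2 / k - d := by
      field_simp
    have h5 := mul_le_mul_of_nonneg_left h1 hd
    rw [h2, h4] at h5
    have h6 : d * (log (s ^ 2) - log k - log d)
        = d * log (s ^ 2) - d * log k - d * log d := by ring
    linarith

lemma abs_log_le_of_mem {a b x : ℝ} (ha : 0 < a) (hax : a ≤ x) (hxb : x ≤ b) :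
    |log x| ≤ |log a| + |log b| := by
  have hx : 0 < x := lt_of_lt_of_le ha hax
  rw [abs_le]
  constructor
  · have := Real.log_le_log ha hax
    have := abs_nonneg (log b)
    have := neg_abs_le (log a)
    linarith
  · have := Real.log_le_log hx hxb
    have := abs_nonneg (log a)
    have := le_abs_self (log b)
    linarith

lemma abs_mul_log_le {x y K : ℝ} (hx0 : 0 ≤ x) (hxy : x ≤ y) (h0y : 0 < y)
    (hyK : y ≤ K) (hK : 1 ≤ K) : |x * log y| ≤ K * |log K| + 1 := by
  have hKabs : 0 ≤ K * |log K| := by positivity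
  rcases le_or_gt y 1 with hy1 | hy1
  · have hlogy : log y ≤ 0 := Real.log_nonpos (le_of_lt h0y) hy1
    have habs : |x * log y| = x * (-log y) := by
      rw [abs_of_nonpos (mul_nonpos_of_nonneg_of_nonpos hx0 hlogy)]; ring
    have h2 : -log y = log (1 / y) := by rw [Real.log_div one_ne_zero (ne_of_gt h0y)]; simp
    have h3 : log (1 / y) ≤ 1 / y - 1 := log_le_sub_one_of_pos (by positivity)
    have h4 : x * (1 / y) ≤ 1 := by
      rw [mul_one_div]
      exact div_le_one_of_le₀ hxy (le_of_lt h0y)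
    have : x * (-log y) ≤ 1 := by
      calc x * (-log y) ≤ x * (1 / y - 1) := by
            rw [h2] at *
            exact mul_le_mul_of_nonneg_left h3 hx0
        _ ≤ 1 := by nlinarith
    linarith [habs ▸ this]
  · have hlogy : 0 ≤ log y := Real.log_nonneg (le_of_lt hy1)
    have habs : |x * log y| = x * log y := abs_of_nonneg (mul_nonneg hx0 hlogy)
    rw [habs]
    have h1 : x * log y ≤ K * log y := mul_le_mul_of_nonneg_right (hxy.trans hyK) hlogy
    have h2 : K * log y ≤ K * log K := by
      apply mul_le_mul_of_nonneg_left (Real.log_le_log h0y hyK) (by linarith)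
    have h3 : K * log K ≤ K * |log K| :=
      mul_le_mul_of_nonneg_left (le_abs_self _) (by linarith)
    linarith

lemma integrable_of_bdd {Ω : Type*} [MeasurableSpace Ω] (μ : Measure Ω)
    [IsProbabilityMeasure μ] {f : Ω → ℝ} (hf : Measurable f) {C : ℝ}
    (h : ∀ ω, |f ω| ≤ C) : Integrable f μ :=
  Integrable.mono' (integrable_const C) hf.aestronglyMeasurable
    (ae_of_all _ fun ω => by simpa [Real.norm_eq_abs] using h ω)


set_option maxHeartbeats 2000000

theorem paired_exp_penalty_formula {Ω : Type*} [MeasurableSpace Ω]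
    (μ : Measure Ω) [IsProbabilityMeasure μ]
    (N : ℕ) (hN : 1 ≤ N)
    (α : Fin N → ℝ) (hα : ∀ n, 0 < α n)
    (U : (Fin N → ℝ) → ℝ)
    (hU : ∀ x, U x = (N : ℝ)^2 / 2 - (1/2) * (∑ n, exp (-(α n * x n)))^2)
    (β Γ : ℝ) (hβ : β = ∑ j, 1 / α j) (hΓ : Γ = ∑ j, (1 / α j) * log (1 / α j))
    (B : ℝ) (hB : B < (N : ℝ)^2 / 2)
    (lam : ℝ) (hlam : lam = ((N : ℝ)^2 - 2 * B) / β)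
    (D : Ω → ℝ) (hDm : Measurable D) (hD0 : ∀ ω, 0 ≤ D ω)
    (K : ℝ) (hDb : ∀ ω, D ω ≤ K) (hD1 : ∫ ω, D ω ∂μ = 1) :
    sSup {r : ℝ | ∃ Z : Ω → Fin N → ℝ, Measurable Z ∧
        (∃ C : ℝ, ∀ ω n, |Z ω n| ≤ C) ∧
        B ≤ ∫ ω, U (Z ω) ∂μ ∧
        r = ∑ n, ∫ ω, (-(Z ω n)) * D ω ∂μ}
      = (Γ - (β * log β) / 2) + (β / 2) * log lam
          + (β / 2) * ∫ ω, D ω * log (D ω) ∂μ := by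
  have hNe : Nonempty (Fin N) := ⟨⟨0, hN⟩⟩
  have hc : ∀ n, 0 < (1:ℝ) / α n := fun n => one_div_pos.mpr (hα n)
  have hβpos : 0 < β := hβ ▸ Finset.sum_pos (fun n _ => hc n) univ_nonempty
  set K₂ : ℝ := (N:ℝ)^2 - 2*B with hK2def
  have hK₂ : 0 < K₂ := by rw [hK2def]; linarith
  have hDint : Integrable D μ :=
    integrable_of_bdd μ hDm (C := K) (fun ω => by rw [abs_of_nonneg (hD0 ω)]; exact hDb ω)
  have hK1 : (1:ℝ) ≤ K := by
    have h1 : ∫ ω, D ω ∂μ ≤ ∫ _ω, K ∂μ :=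
      integral_mono hDint (integrable_const K) (fun ω => hDb ω)
    rwa [hD1, integral_const, probReal_univ, one_smul] at h1
  set Hent : ℝ := ∫ ω, D ω * log (D ω) ∂μ with hHdef
  set V : ℝ := Γ - β*log β + (β/2)*log K₂ + (β/2)*Hent with hVdef
  have hVeq : (Γ - (β * log β) / 2) + (β / 2) * log lam + (β / 2) * Hent = V := by
    rw [hlam, Real.log_div (ne_of_gt hK₂) (ne_of_gt hβpos), hVdef]; ring
  rw [hVeq]
  set Sset : Set ℝ := {r : ℝ | ∃ Z : Ω → Fin N → ℝ, Measurable Z ∧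
      (∃ C : ℝ, ∀ ω n, |Z ω n| ≤ C) ∧
      B ≤ ∫ ω, U (Z ω) ∂μ ∧
      r = ∑ n, ∫ ω, (-(Z ω n)) * D ω ∂μ} with hSsetdef
  -- upper bound
  have hDlogDint : Integrable (fun ω => D ω * log (D ω)) μ :=
    integrable_of_bdd μ (hDm.mul hDm.log) (C := K * |log K| + 1) (fun ω => by
      rcases eq_or_lt_of_le (hD0 ω) with h | h
      · rw [← h]
        simp
        positivity
      · exact abs_mul_log_le (hD0 ω) le_rfl h (hDb ω) hK1)
  have hub : ∀ r ∈ Sset, r ≤ V := by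
    rintro x ⟨Z, hZm, ⟨C, hC⟩, hcon, hx⟩
    have hZnm : ∀ n, Measurable (fun ω => Z ω n) := fun n => (measurable_pi_apply n).comp hZm
    set S : Ω → ℝ := fun ω => ∑ n, exp (-(α n * Z ω n)) with hSdef
    have hSapp : ∀ ω, (∑ n, exp (-(α n * Z ω n))) = S ω := fun ω => rfl
    have hSm : Measurable S := by
      apply Finset.measurable_sum
      intro n _
      exact ((measurable_const.mul (hZnm n)).neg).exp
    have hSpos : ∀ ω, 0 < S ω := fun ω => Finset.sum_pos (fun n _ => exp_pos _) univ_nonempty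
    set Smax : ℝ := ∑ n, exp (α n * C) with hSmaxdef
    have hSbd : ∀ ω, S ω ≤ Smax := by
      intro ω
      apply Finset.sum_le_sum
      intro n _
      apply Real.exp_le_exp.mpr
      have h1 := abs_le.mp (hC ω n)
      nlinarith [hα n]
    have hS2int : Integrable (fun ω => (S ω)^2) μ :=
      integrable_of_bdd μ (hSm.pow_const 2) (C := Smax^2) (fun ω => by
        rw [abs_of_nonneg (sq_nonneg (S ω))]
        exact pow_le_pow_left₀ (le_of_lt (hSpos ω)) (hSbd ω) 2)
    have hScon : ∫ ω, (S ω)^2 ∂μ ≤ K₂ := by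
      have h1 : ∫ ω, U (Z ω) ∂μ = (N:ℝ)^2/2 - (1/2) * ∫ ω, (S ω)^2 ∂μ := by
        simp only [hU, hSapp]
        rw [integral_sub (integrable_const _) (hS2int.const_mul _), integral_const,
          probReal_univ, one_smul, integral_const_mul]
      rw [h1] at hcon
      rw [hK2def]
      linarith
    set a' : ℝ := Γ - β*log β + (β/2)*log K₂ - β/2 with ha'def
    have hint_n : ∀ n, Integrable (fun ω => (-(Z ω n)) * D ω) μ := fun n =>
      integrable_of_bdd μ ((hZnm n).neg.mul hDm) (C := C * K) (fun ω => by
        rw [abs_mul, abs_neg, abs_of_nonneg (hD0 ω)]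
        exact mul_le_mul (hC ω n) (hDb ω) (hD0 ω) (le_trans (abs_nonneg _) (hC ω n)))
    have hLint : Integrable (fun ω => (∑ n, -(Z ω n)) * D ω) μ :=
      integrable_of_bdd μ ((Finset.measurable_sum univ (fun n _ => (hZnm n).neg)).mul hDm)
        (C := ((N:ℝ) * C) * K) (fun ω => by
          rw [abs_mul, abs_of_nonneg (hD0 ω)]
          have h1 : |∑ n, -(Z ω n)| ≤ (N:ℝ) * C := by
            calc |∑ n, -(Z ω n)| ≤ ∑ n, |(-(Z ω n))| := Finset.abs_sum_le_sum_abs _ _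
              _ ≤ ∑ _n : Fin N, C := Finset.sum_le_sum (fun n _ => by
                  rw [abs_neg]; exact hC ω n)
              _ = (N:ℝ) * C := by simp [Finset.sum_const, Finset.card_univ, nsmul_eq_mul]
          have hK0 : (0:ℝ) ≤ K := le_trans zero_le_one hK1
          exact mul_le_mul h1 (hDb ω) (hD0 ω) (le_trans (abs_nonneg _) h1))
    have hgint : Integrable (fun ω =>
        a' * D ω + β/(2*K₂) * (S ω)^2 + β/2 * (D ω * log (D ω))) μ :=
      ((hDint.const_mul a').add (hS2int.const_mul _)).add (hDlogDint.const_mul _)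
    have hpt : ∀ ω, (∑ n, -(Z ω n)) * D ω ≤
        a' * D ω + β/(2*K₂) * (S ω)^2 + β/2 * (D ω * log (D ω)) := by
      intro ω
      have step0 : ∑ n, -(Z ω n) = ∑ n, (1/α n) * log (exp (-(α n * Z ω n))) := by
        apply Finset.sum_congr rfl
        intro n _
        rw [Real.log_exp]
        field_simp [(hα n).ne']
      have step1 : ∑ n, (1/α n) * log (exp (-(α n * Z ω n))) ≤ Γ - β*log β + β*log (S ω) := by
        have h := gibbs_sum hN (fun n => 1/α n) (fun n => exp (-(α n * Z ω n))) hc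
          (fun n => exp_pos _)
        rw [← hβ, ← hΓ] at h
        exact h
      have step2 : (∑ n, -(Z ω n)) * D ω ≤ (Γ - β*log β + β*log (S ω)) * D ω := by
        rw [step0]
        exact mul_le_mul_of_nonneg_right step1 (hD0 ω)
      have e1 : (Γ - β*log β + β * log (S ω)) * D ω
          = (Γ - β*log β)*D ω + (β/2)*(D ω * log ((S ω)^2)) := by
        rw [Real.log_pow]
        push_cast
        ring
      have e2 := entropy_pt (hD0 ω) (hSpos ω) hK₂
      have e3 : (β/2)*(D ω * log ((S ω)^2))
          ≤ (β/2)*(D ω*log K₂ + D ω*log (D ω) + (S ω)^2/K₂ - D ω) := by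
        apply mul_le_mul_of_nonneg_left e2 (by positivity)
      have e4 : (Γ-β*log β)*D ω + (β/2)*(D ω*log K₂ + D ω*log (D ω) + (S ω)^2/K₂ - D ω)
          = a'*D ω + β/(2*K₂)*(S ω)^2 + β/2*(D ω*log (D ω)) := by
        rw [ha'def]
        field_simp
        ring
      linarith
    have hle := integral_mono hLint hgint hpt
    have hxeq : x = ∫ ω, (∑ n, -(Z ω n)) * D ω ∂μ := by
      rw [hx, ← integral_finset_sum univ (fun n _ => hint_n n)]
      congr 1
      funext ω
      rw [Finset.sum_mul]
    have hgval : ∫ ω, (a' * D ω + β/(2*K₂) * (S ω)^2 + β/2 * (D ω * log (D ω))) ∂μ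
        = a' + β/(2*K₂) * (∫ ω, (S ω)^2 ∂μ) + β/2 * Hent := by
      have A1 := integral_add (μ := μ)
        ((hDint.const_mul a').add (hS2int.const_mul (β/(2*K₂)))) (hDlogDint.const_mul (β/2))
      have A2 := integral_add (μ := μ) (hDint.const_mul a') (hS2int.const_mul (β/(2*K₂)))
      simp only [Pi.add_apply] at A1 A2
      rw [A1, A2, integral_const_mul, integral_const_mul, integral_const_mul, hD1, mul_one, hHdef]
    have hfin : β/(2*K₂) * (∫ ω, (S ω)^2 ∂μ) ≤ β/2 := by
      have h1 : β/(2*K₂) * (∫ ω, (S ω)^2 ∂μ) ≤ β/(2*K₂) * K₂ :=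
        mul_le_mul_of_nonneg_left hScon (by positivity)
      have h2 : β/(2*K₂) * K₂ = β/2 := by
        field_simp
      linarith
    rw [hxeq, hVdef]
    rw [hgval] at hle
    rw [ha'def] at hle
    linarith
  -- approximating sequence
  set t : ℕ → ℝ := fun k => 1/((k:ℝ)+1) with htdef
  have ht0 : ∀ k, 0 < t k := fun k => by positivity
  have ht1 : ∀ k, t k ≤ 1 := fun k => by
    rw [htdef]; rw [div_le_one (by positivity)]; push_cast; linarith [Nat.cast_nonneg (α := ℝ) k]
  set Dk : ℕ → Ω → ℝ := fun k ω => max (D ω) (t k) with hDkdef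
  set M : ℕ → ℝ := fun k => ∫ ω, Dk k ω ∂μ with hMdef
  set I : ℕ → ℝ := fun k => ∫ ω, D ω * log (Dk k ω) ∂μ with hIdef
  set r : ℕ → ℝ := fun k => Γ - β*log β + (β/2)*(log K₂ - log (M k) + I k) with hrdef
  have hDkm : ∀ k, Measurable (Dk k) := fun k => hDm.max measurable_const
  have hDkpos : ∀ k ω, 0 < Dk k ω := fun k ω => lt_of_lt_of_le (ht0 k) (le_max_right _ _)
  have hDkleK : ∀ k ω, Dk k ω ≤ K := fun k ω => max_le (hDb ω) ((ht1 k).trans hK1)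
  have hDkint : ∀ k, Integrable (Dk k) μ := fun k =>
    integrable_of_bdd μ (hDkm k) (C := K)
      (fun ω => by rw [abs_of_nonneg (le_of_lt (hDkpos k ω))]; exact hDkleK k ω)
  have hM1 : ∀ k, 1 ≤ M k := fun k => by
    rw [hMdef, ← hD1]
    exact integral_mono hDint (hDkint k) (fun ω => le_max_left _ _)
  have hM2 : ∀ k, M k ≤ 1 + t k := fun k => by
    have h1 : ∫ ω, Dk k ω ∂μ ≤ ∫ ω, (D ω + t k) ∂μ :=
      integral_mono (hDkint k) (hDint.add (integrable_const _))
        (fun ω => max_le (by linarith [ht0 k]) (by linarith [hD0 ω]))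
    rw [integral_add hDint (integrable_const _), hD1, integral_const, probReal_univ,
      one_smul] at h1
    exact h1
  have hmem : ∀ k, r k ∈ Sset := by
    intro k
    have hM0 : (0:ℝ) < M k := lt_of_lt_of_le one_pos (hM1 k)
    have hMne : M k ≠ 0 := ne_of_gt hM0
    have hM2' : M k ≤ 2 := le_trans (hM2 k) (by linarith [ht1 k])
    set A : Ω → ℝ := fun ω => K₂ * Dk k ω / M k with hAdef
    have hApos : ∀ ω, 0 < A ω := fun ω =>
      div_pos (mul_pos hK₂ (hDkpos k ω)) hM0
    have hAlo : ∀ ω, K₂ * t k / 2 ≤ A ω := fun ω =>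
      div_le_div₀ (le_of_lt (mul_pos hK₂ (hDkpos k ω)))
        (mul_le_mul_of_nonneg_left (le_max_right _ _) (le_of_lt hK₂)) hM0 hM2'
    have hAhi : ∀ ω, A ω ≤ K₂ * K := fun ω => by
      have h1 : K₂ * Dk k ω / M k ≤ K₂ * K / 1 :=
        div_le_div₀ (le_of_lt (mul_pos hK₂ (lt_of_lt_of_le one_pos hK1)))
          (mul_le_mul_of_nonneg_left (hDkleK k ω) (le_of_lt hK₂)) one_pos (hM1 k)
      simpa using h1
    have hsq : ∀ ω, 0 < Real.sqrt (A ω) := fun ω => Real.sqrt_pos.mpr (hApos ω)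
    set Z' : Ω → Fin N → ℝ :=
      fun ω n => -((1/α n) * log (1/α n / β * Real.sqrt (A ω))) with hZ'def
    have hWpos : ∀ ω n, 0 < 1/α n / β * Real.sqrt (A ω) := fun ω n =>
      mul_pos (div_pos (hc n) hβpos) (hsq ω)
    have hAm : Measurable A := ((hDkm k).const_mul K₂).div_const (M k)
    have hMk : M k = ∫ ω, Dk k ω ∂μ := rfl
    have hIk : I k = ∫ ω, D ω * log (Dk k ω) ∂μ := rfl
    have hloK : 0 < K₂ * t k / 2 := div_pos (mul_pos hK₂ (ht0 k)) two_pos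
    have hWlo : ∀ ω n, 1/α n / β * Real.sqrt (K₂ * t k / 2) ≤ 1/α n / β * Real.sqrt (A ω) :=
      fun ω n => mul_le_mul_of_nonneg_left (Real.sqrt_le_sqrt (hAlo ω))
        (le_of_lt (div_pos (hc n) hβpos))
    have hWhi : ∀ ω n, 1/α n / β * Real.sqrt (A ω) ≤ 1/α n / β * Real.sqrt (K₂ * K) :=
      fun ω n => mul_le_mul_of_nonneg_left (Real.sqrt_le_sqrt (hAhi ω))
        (le_of_lt (div_pos (hc n) hβpos))
    have hlopos : ∀ n, 0 < 1/α n / β * Real.sqrt (K₂ * t k / 2) := fun n =>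
      mul_pos (div_pos (hc n) hβpos) (Real.sqrt_pos.mpr hloK)
    refine ⟨Z', ?_, ?_, ?_, ?_⟩
    · apply measurable_pi_lambda
      intro n
      exact (((hAm.sqrt).const_mul _).log.const_mul _).neg
    · refine ⟨∑ n, (1/α n) * (|log (1/α n / β * Real.sqrt (K₂ * t k / 2))|
        + |log (1/α n / β * Real.sqrt (K₂ * K))|), fun ω n => ?_⟩
      have h1 : |Z' ω n| = (1/α n) * |log (1/α n / β * Real.sqrt (A ω))| := by
        rw [hZ'def]
        rw [abs_neg, abs_mul, abs_of_nonneg (le_of_lt (hc n))]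
      rw [h1]
      have h2 : (1/α n) * |log (1/α n / β * Real.sqrt (A ω))|
          ≤ (1/α n) * (|log (1/α n / β * Real.sqrt (K₂ * t k / 2))|
            + |log (1/α n / β * Real.sqrt (K₂ * K))|) :=
        mul_le_mul_of_nonneg_left
          (abs_log_le_of_mem (hlopos n) (hWlo ω n) (hWhi ω n)) (le_of_lt (hc n))
      refine le_trans h2 (Finset.single_le_sum (f := fun n => (1/α n) *
        (|log (1/α n / β * Real.sqrt (K₂ * t k / 2))|
          + |log (1/α n / β * Real.sqrt (K₂ * K))|)) (fun i _ => ?_) (mem_univ n))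
      have := abs_nonneg (log (1/α i / β * Real.sqrt (K₂ * t k / 2)))
      have := abs_nonneg (log (1/α i / β * Real.sqrt (K₂ * K)))
      have := le_of_lt (hc i)
      positivity
    · -- constraint
      have hUeq : ∀ ω, U (Z' ω) = (N:ℝ)^2/2 - K₂/(2*M k) * Dk k ω := by
        intro ω
        rw [hU]
        have hexp : ∀ n, exp (-(α n * Z' ω n)) = 1/α n / β * Real.sqrt (A ω) := by
          intro n
          have h1 : -(α n * Z' ω n) = log (1/α n / β * Real.sqrt (A ω)) := by
            rw [hZ'def]
            have h0 : α n * (1/α n) = 1 := by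
              rw [mul_one_div, div_self (ne_of_gt (hα n))]
            calc -(α n * -((1/α n) * log (1/α n / β * Real.sqrt (A ω))))
                = (α n * (1/α n)) * log (1/α n / β * Real.sqrt (A ω)) := by ring
              _ = log (1/α n / β * Real.sqrt (A ω)) := by rw [h0, one_mul]
          rw [h1, Real.exp_log (hWpos ω n)]
        rw [Finset.sum_congr rfl (fun n _ => hexp n)]
        have hsum : ∑ n, 1/α n / β * Real.sqrt (A ω) = Real.sqrt (A ω) := by
          rw [← Finset.sum_mul, ← Finset.sum_div, ← hβ, div_self (ne_of_gt hβpos), one_mul]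
        rw [hsum, Real.sq_sqrt (le_of_lt (hApos ω))]
        have hA : A ω = K₂ * Dk k ω / M k := rfl
        rw [hA]
        field_simp
      have hval : ∫ ω, U (Z' ω) ∂μ = B := by
        simp only [hUeq]
        rw [integral_sub (integrable_const _) ((hDkint k).const_mul _), integral_const_mul,
          integral_const, probReal_univ, one_smul, ← hMk]
        have h2 : K₂/(2*M k) * M k = K₂/2 := by
          field_simp
        rw [h2, hK2def]
        ring
      exact le_of_eq hval.symm
    · -- value
      have hlogW : ∀ ω n, log (1/α n / β * Real.sqrt (A ω))
          = (log (1/α n) - log β) + (log K₂ + log (Dk k ω) - log (M k))/2 := by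
        intro ω n
        rw [Real.log_mul (ne_of_gt (div_pos (hc n) hβpos)) (ne_of_gt (hsq ω)),
          Real.log_div (ne_of_gt (hc n)) (ne_of_gt hβpos),
          Real.log_sqrt (le_of_lt (hApos ω))]
        have hA : A ω = K₂ * Dk k ω / M k := rfl
        rw [hA, Real.log_div (ne_of_gt (mul_pos hK₂ (hDkpos k ω))) hMne,
          Real.log_mul (ne_of_gt hK₂) (ne_of_gt (hDkpos k ω))]
      have i3 : Integrable (fun ω => D ω * log (Dk k ω)) μ :=
        integrable_of_bdd μ (hDm.mul (hDkm k).log) (C := K*|log K|+1) (fun ω =>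
          abs_mul_log_le (hD0 ω) (le_max_left _ _) (hDkpos k ω) (hDkleK k ω) hK1)
      have hint1 : ∀ n : Fin N, ∫ ω, (-(Z' ω n)) * D ω ∂μ
          = (1/α n)*(log (1/α n) - log β) + (1/α n)/2*(log K₂ - log (M k))
            + (1/α n)/2 * I k := by
        intro n
        have hZD : (fun ω => (-(Z' ω n)) * D ω) = fun ω =>
            ((1/α n) * (log (1/α n) - log β)) * D ω
            + ((1/α n)/2 * (log K₂ - log (M k))) * D ω
            + (1/α n)/2 * (D ω * log (Dk k ω)) := by
          funext ω
          rw [hZ'def]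
          simp only [neg_neg]
          rw [hlogW ω n]
          ring
        rw [hZD]
        have i1 : Integrable (fun ω => ((1/α n)*(log (1/α n) - log β)) * D ω) μ :=
          hDint.const_mul _
        have i2 : Integrable (fun ω => ((1/α n)/2*(log K₂ - log (M k))) * D ω) μ :=
          hDint.const_mul _
        have A1 := integral_add (μ := μ) (i1.add i2) (i3.const_mul ((1/α n)/2))
        have A2 := integral_add (μ := μ) i1 i2
        simp only [Pi.add_apply] at A1 A2
        rw [A1, A2, integral_const_mul, integral_const_mul, integral_const_mul, hD1,
          mul_one, mul_one, ← hIk]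
      rw [Finset.sum_congr rfl (fun n _ => hint1 n)]
      rw [Finset.sum_add_distrib, Finset.sum_add_distrib]
      have e1 : ∑ n, (1/α n)*(log (1/α n) - log β) = Γ - β * log β := by
        simp only [mul_sub]
        rw [Finset.sum_sub_distrib, ← Finset.sum_mul, ← hΓ, ← hβ]
      have e2 : ∑ n, (1/α n)/2*(log K₂ - log (M k)) = β/2 * (log K₂ - log (M k)) := by
        rw [← Finset.sum_mul, ← Finset.sum_div, ← hβ]
      have e3 : ∑ n : Fin N, (1/α n)/2 * I k = β/2 * I k := by
        rw [← Finset.sum_mul, ← Finset.sum_div, ← hβ]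
      rw [e1, e2, e3, hrdef]
      ring
  have hMtend : Tendsto M atTop (𝓝 1) := by
    have htt : Tendsto (fun k : ℕ => 1 + t k) atTop (𝓝 1) := by
      have := tendsto_one_div_add_atTop_nhds_zero_nat (𝕜 := ℝ)
      have h2 := tendsto_const_nhds (x := (1:ℝ)) (f := atTop (α := ℕ))
      simpa [htdef, one_div] using h2.add this
    exact tendsto_of_tendsto_of_tendsto_of_le_of_le tendsto_const_nhds htt hM1 hM2
  have hlogM : Tendsto (fun k => log (M k)) atTop (𝓝 0) := by
    have := ((Real.continuousAt_log one_ne_zero).tendsto).comp hMtend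
    rw [Real.log_one] at this
    exact this
  have hItend : Tendsto I atTop (𝓝 Hent) := by
    rw [hIdef, hHdef]
    apply tendsto_integral_of_dominated_convergence (fun _ => K * |log K| + 1)
    · exact fun k => (hDm.mul (hDkm k).log).aestronglyMeasurable
    · exact integrable_const _
    · intro k
      refine Eventually.of_forall (fun ω => ?_)
      rw [Real.norm_eq_abs]
      exact abs_mul_log_le (hD0 ω) (le_max_left _ _) (hDkpos k ω) (hDkleK k ω) hK1
    · refine Eventually.of_forall (fun ω => ?_)
      rcases eq_or_lt_of_le (hD0 ω) with h | h
      · simp only [hDkdef, ← h, zero_mul]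
        exact tendsto_const_nhds
      · obtain ⟨n, hn⟩ := exists_nat_gt (1 / D ω)
        refine Tendsto.congr' ?_ (tendsto_const_nhds (x := D ω * log (D ω)))
        rw [Filter.eventuallyEq_iff_exists_mem]
        refine ⟨{k | n ≤ k}, mem_atTop n, fun k hk => ?_⟩
        have hkk : t k ≤ D ω := by
          rw [htdef]
          rw [div_le_iff₀ (by positivity)]
          have h1 : 1 / D ω < (k:ℝ) + 1 := by
            have : (n:ℝ) ≤ (k:ℝ) := Nat.cast_le.mpr hk
            linarith
          rw [div_lt_iff₀ h] at h1
          linarith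
        simp only [hDkdef, max_eq_left hkk]
  have hconv : Tendsto r atTop (𝓝 V) := by
    have h1 : Tendsto (fun k => Γ - β*log β + (β/2)*(log K₂ - log (M k) + I k)) atTop
        (𝓝 (Γ - β*log β + (β/2)*(log K₂ - 0 + Hent))) :=
      tendsto_const_nhds.add (((tendsto_const_nhds.sub hlogM).add hItend).const_mul _)
    rw [hrdef, hVdef]
    convert h1 using 2
    ring
  have hSne : Sset.Nonempty := ⟨r 0, hmem 0⟩
  have hbdd : BddAbove Sset := ⟨V, fun x hx => hub x hx⟩
  refine le_antisymm (csSup_le hSne hub) ?_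
  exact le_of_tendsto hconv (Eventually.of_forall fun k => le_csSup hbdd (hmem k))
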